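/- There exists an m×m real orthogonal matrix B (independent of A and K) such that for all n×n real matrices A and K, the restricted quasi-Kronecker matrix rQK(A,K) satisfies rQK(A,K) = (B ⊗ I_n)ᵗ · bdiag(A + m·K, A, A, …, A) · (B ⊗ I_n), where bdiag(A + m·K, A, …, A) denotes the mn×mn block-diagonal matrix whose first n×n diagonal block is A + m·K and whose remaining m−1 diagonal blocks all equal A. -/

import Mathlib

open Matrix Kronecker

/-- The restricted quasi-Kronecker matrix `rQK(A, K) = I_m ⊗ A + (e eᵗ) ⊗ K`. -/
noncomputable def rQK {n : ℕ} (m : ℕ) (A K : Matrix (Fin n) (Fin n) ℝ) :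
    Matrix (Fin m × Fin n) (Fin m × Fin n) ℝ :=
  (1 : Matrix (Fin m) (Fin m) ℝ) ⊗ₖ A + (Matrix.of fun _ _ => (1 : ℝ)) ⊗ₖ K

/-- Block-diagonal matrix with `n × n` diagonal blocks `D 0, …, D (m-1)`. -/
noncomputable def bdiag {n m : ℕ} (D : Fin m → Matrix (Fin n) (Fin n) ℝ) :
    Matrix (Fin m × Fin n) (Fin m × Fin n) ℝ :=
  Matrix.of fun p q => if p.1 = q.1 then D p.1 p.2 q.2 else 0

/-- There is an `m × m` orthogonal matrix `B`, independent of `A` and `K`, that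
block-rotates `rQK(A, K)` into `bdiag(A + m·K, A, …, A)`. -/
theorem rQK_block_rotated (n m : ℕ) (hm : 0 < m) :
    ∃ B : Matrix (Fin m) (Fin m) ℝ, Bᵀ * B = 1 ∧
      ∀ A K : Matrix (Fin n) (Fin n) ℝ,
        rQK m A K =
          (B ⊗ₖ (1 : Matrix (Fin n) (Fin n) ℝ))ᵀ *
            bdiag (fun i => if (i : ℕ) = 0 then A + (m : ℝ) • K else A) *
            (B ⊗ₖ (1 : Matrix (Fin n) (Fin n) ℝ)) := by
  have hm0 : (0 : ℝ) < (m : ℝ) := by exact_mod_cast hm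
  have hs : (0 : ℝ) < Real.sqrt m := Real.sqrt_pos.mpr hm0
  haveI : NeZero m := ⟨hm.ne'⟩
  -- the unit vector with all entries `1/√m`
  set u : EuclideanSpace ℝ (Fin m) := WithLp.toLp 2 (fun _ => (Real.sqrt m)⁻¹) with hu_def
  have hnorm : ‖u‖ = 1 := by
    rw [EuclideanSpace.norm_eq]
    have h1 : ∀ i : Fin m, ‖u i‖ ^ 2 = ((m : ℝ))⁻¹ := by
      intro i
      simp only [hu_def, PiLp.toLp_apply, Real.norm_eq_abs, sq_abs, ← Real.sqrt_inv]
      exact Real.sq_sqrt (inv_nonneg.mpr hm0.le)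
    rw [Finset.sum_congr rfl fun i _ => h1 i, Finset.sum_const, Finset.card_fin,
      nsmul_eq_mul, mul_inv_cancel₀ hm0.ne']
    exact Real.sqrt_one
  -- extend to an orthonormal basis
  have hcard : Module.finrank ℝ (EuclideanSpace ℝ (Fin m)) = Fintype.card (Fin m) := by simp
  have horth : Orthonormal ℝ (({0} : Set (Fin m)).restrict fun _ => u) := by
    constructor
    · intro i; exact hnorm
    · intro i j hij
      exact absurd (Subtype.ext (i.2.trans j.2.symm)) hij
  obtain ⟨b, hb⟩ := horth.exists_orthonormalBasis_extension_of_card_eq hcard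
  have hb0 : ∀ k, b 0 k = (Real.sqrt m)⁻¹ := by
    intro k
    rw [hb 0 (Set.mem_singleton 0)]
  set B : Matrix (Fin m) (Fin m) ℝ := Matrix.of fun i j => b i j with hB
  have key : ∀ i j, (∑ k, b i k * b j k) = if i = j then (1 : ℝ) else 0 := by
    intro i j
    have h := (orthonormal_iff_ite.mp b.orthonormal) i j
    rw [PiLp.inner_apply] at h
    simpa [RCLike.inner_apply, mul_comm] using h
  have hBB : Bᵀ * B = 1 := by
    rw [mul_eq_one_comm]
    ext i j
    simp only [Matrix.mul_apply, Matrix.transpose_apply, Matrix.of_apply, Matrix.one_apply, hB]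
    exact key i j
  refine ⟨B, hBB, ?_⟩
  intro A K
  -- decompose bdiag
  have hbd : bdiag (fun i : Fin m => if (i : ℕ) = 0 then A + (m : ℝ) • K else A)
      = (1 : Matrix (Fin m) (Fin m) ℝ) ⊗ₖ A
        + (Matrix.single (0 : Fin m) 0 (1 : ℝ)) ⊗ₖ ((m : ℝ) • K) := by
    ext ⟨i, a⟩ ⟨j, c⟩
    simp only [bdiag, Matrix.of_apply, Matrix.add_apply, Matrix.kroneckerMap_apply,
      Matrix.one_apply, Matrix.single, Matrix.smul_apply, smul_eq_mul]
    by_cases hij : i = j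
    · subst hij
      by_cases hi0 : i = 0
      · subst hi0; simp [Matrix.of_apply]
      · have h2 : (i : ℕ) ≠ 0 := fun h => hi0 (Fin.ext h)
        have h3 : ¬((0 : Fin m) = i ∧ (0 : Fin m) = i) := fun h => hi0 h.1.symm
        have h6 : ¬((0 : Fin m) = i) := fun h => hi0 h.symm
        simp [h2, h6, Matrix.of_apply]
    · have h3 : ¬((0 : Fin m) = i ∧ (0 : Fin m) = j) := fun h => hij (h.1.symm.trans h.2)
      simp [hij, h3]
  have hBEB : Bᵀ * Matrix.single (0 : Fin m) 0 (1 : ℝ) * B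
      = ((m : ℝ))⁻¹ • (Matrix.of fun _ _ => (1 : ℝ)) := by
    ext i j
    simp only [Matrix.mul_apply, Matrix.transpose_apply, Matrix.single,
      Matrix.smul_apply, Matrix.of_apply, smul_eq_mul, mul_one]
    have h4 : ∀ x : Fin m, (∑ y : Fin m,
        B y i * ((if 0 = y ∧ 0 = x then (1:ℝ) else 0))) * B x j
        = (if x = 0 then B 0 i * B x j else 0) := by
      intro x
      by_cases hx : x = 0
      · subst hx
        rw [Finset.sum_eq_single 0]
        · simp
        · intro y _ hy; simp [Ne.symm hy]
        · simp
      · rw [if_neg hx]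
        apply mul_eq_zero_of_left
        apply Finset.sum_eq_zero
        intro y _
        have h5 : ¬((0:Fin m) = y ∧ (0:Fin m) = x) := fun h => hx h.2.symm
        simp [h5]
    rw [Finset.sum_congr rfl fun x _ => h4 x, Finset.sum_eq_single 0]
    · have h6 : B 0 i = (Real.sqrt m)⁻¹ := hb0 i
      have h7 : B 0 j = (Real.sqrt m)⁻¹ := hb0 j
      rw [if_pos rfl, h6, h7, ← mul_inv, Real.mul_self_sqrt hm0.le]
    · intro y _ hy; simp [hy]
    · simp
  have ht : (B ⊗ₖ (1 : Matrix (Fin n) (Fin n) ℝ))ᵀ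
      = Bᵀ ⊗ₖ (1 : Matrix (Fin n) (Fin n) ℝ) := by
    rw [← Matrix.kroneckerMap_transpose, Matrix.transpose_one]
  rw [hbd, ht, Matrix.mul_add, Matrix.add_mul]
  have e1 : Bᵀ ⊗ₖ (1 : Matrix (Fin n) (Fin n) ℝ) * ((1 : Matrix (Fin m) (Fin m) ℝ) ⊗ₖ A)
      * (B ⊗ₖ (1 : Matrix (Fin n) (Fin n) ℝ))
      = (1 : Matrix (Fin m) (Fin m) ℝ) ⊗ₖ A := by
    rw [← Matrix.mul_kronecker_mul, ← Matrix.mul_kronecker_mul, Matrix.mul_one, Matrix.one_mul,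
      Matrix.mul_one, hBB]
  have e2 : Bᵀ ⊗ₖ (1 : Matrix (Fin n) (Fin n) ℝ)
      * (Matrix.single (0 : Fin m) 0 (1 : ℝ) ⊗ₖ ((m : ℝ) • K))
      * (B ⊗ₖ (1 : Matrix (Fin n) (Fin n) ℝ))
      = (Matrix.of fun _ _ => (1 : ℝ)) ⊗ₖ K := by
    rw [← Matrix.mul_kronecker_mul, ← Matrix.mul_kronecker_mul, Matrix.one_mul,
      Matrix.mul_one, hBEB, Matrix.smul_kronecker, Matrix.kronecker_smul, smul_smul,
      inv_mul_cancel₀ hm0.ne', one_smul]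
  rw [e1, e2, rQK]
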